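/- Let A and B be finite-dimensional k-algebras, M an A-B-bimodule and N a B-A-bimodule such that the regular A-A-bimodule A is isomorphic to a direct summand of M ⊗_B N and the regular B-B-bimodule B is isomorphic to a direct summand of N ⊗_A M. If the functors M ⊗_B − : B-mod → A-mod and N ⊗_A − : A-mod → B-mod are biadjoint (each is both left and right adjoint to the other), then M is projective as a left A-module and as a right B-module, and N is projective as a left B-module and as a right A-module; consequently A and B are symmetrically separably equivalent. -/

import Mathlib

set_option linter.unusedSectionVars false

open scoped TensorProduct
open MulOpposite

universe u

attribute [local instance 2000] TensorProduct.instModule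

namespace JJ

noncomputable section

section BalTensor

variable (B : Type u) [Ring B] (M : Type u) [AddCommGroup M] [Module Bᵐᵒᵖ M]
  (N : Type u) [AddCommGroup N] [Module B N]

/-- The subgroup of relations defining the balanced tensor product `M ⊗_B N`. -/
def balRel : Submodule ℤ (TensorProduct ℤ M N) :=
  Submodule.span ℤ { z | ∃ (b : B) (m : M) (n : N),
    z = (op b • m) ⊗ₜ[ℤ] n - m ⊗ₜ[ℤ] (b • n) }

/-- The balanced tensor product `M ⊗_B N` of a right `B`-module `M` and a left `B`-module `N`. -/
def BalTensor : Type u := TensorProduct ℤ M N ⧸ balRel B M N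

instance : AddCommGroup (BalTensor B M N) :=
  inferInstanceAs (AddCommGroup (TensorProduct ℤ M N ⧸ balRel B M N))

/-- The canonical projection onto the balanced tensor product. -/
def BalTensor.mk : TensorProduct ℤ M N →+ BalTensor B M N :=
  (balRel B M N).mkQ.toAddMonoidHom

/-- The image of a pure tensor in the balanced tensor product. -/
def BalTensor.tmul (m : M) (n : N) : BalTensor B M N := BalTensor.mk B M N (m ⊗ₜ n)

lemma BalTensor.mk_surjective : Function.Surjective (BalTensor.mk B M N) :=
  Submodule.mkQ_surjective _

lemma BalTensor.balance (b : B) (m : M) (n : N) :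
    BalTensor.tmul B M N (op b • m) n = BalTensor.tmul B M N m (b • n) := by
  have h : ((op b • m) ⊗ₜ[ℤ] n - m ⊗ₜ[ℤ] (b • n)) ∈ balRel B M N :=
    Submodule.subset_span ⟨b, m, n, rfl⟩
  have h2 := (Submodule.Quotient.mk_eq_zero (balRel B M N)).2 h
  rw [Submodule.Quotient.mk_sub] at h2
  exact sub_eq_zero.1 h2

end BalTensor

section LeftAction

variable (B : Type u) [Ring B] (M : Type u) [AddCommGroup M] [Module Bᵐᵒᵖ M]
  (N : Type u) [AddCommGroup N] [Module B N]
  (A : Type u) [Ring A] [Module A M] [SMulCommClass A Bᵐᵒᵖ M]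

/-- The left action of `a : A` on the plain tensor product. -/
def lActAux (a : A) : TensorProduct ℤ M N →ₗ[ℤ] TensorProduct ℤ M N :=
  LinearMap.rTensor N (DistribMulAction.toAddMonoidHom M a).toIntLinearMap

lemma lActAux_tmul (a : A) (m : M) (n : N) :
    lActAux M N A a (m ⊗ₜ n) = (a • m) ⊗ₜ n := by
  simp [lActAux]

lemma lActAux_rel (a : A) :
    balRel B M N ≤ (balRel B M N).comap (lActAux M N A a) := by
  rw [balRel, Submodule.span_le]
  rintro z ⟨b, m, n, rfl⟩
  simp only [SetLike.mem_coe, Submodule.mem_comap, map_sub, lActAux_tmul]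
  rw [smul_comm a (op b) m]
  exact Submodule.subset_span ⟨b, a • m, n, rfl⟩

/-- The left action of `A` on the balanced tensor product. -/
def lAct (a : A) : BalTensor B M N →ₗ[ℤ] BalTensor B M N :=
  Submodule.mapQ _ _ (lActAux M N A a) (lActAux_rel B M N A a)

instance : SMul A (BalTensor B M N) := ⟨fun a x => lAct B M N A a x⟩

lemma BalTensor.lsmul_mk (a : A) (x : TensorProduct ℤ M N) :
    a • (BalTensor.mk B M N x) = BalTensor.mk B M N (lActAux M N A a x) := rfl

lemma BalTensor.lsmul_tmul (a : A) (m : M) (n : N) :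
    a • (BalTensor.tmul B M N m n) = BalTensor.tmul B M N (a • m) n := by
  rw [BalTensor.tmul, BalTensor.lsmul_mk, lActAux_tmul]
  rfl

instance BalTensor.instLeftModule : Module A (BalTensor B M N) where
  one_smul x := by
    obtain ⟨y, rfl⟩ := BalTensor.mk_surjective B M N x
    rw [BalTensor.lsmul_mk]
    congr 1
    have h : lActAux M N A (1 : A) = LinearMap.id :=
      TensorProduct.ext' fun m n => by rw [lActAux_tmul, one_smul]; rfl
    rw [h]; rfl
  mul_smul a b x := by
    obtain ⟨y, rfl⟩ := BalTensor.mk_surjective B M N x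
    rw [BalTensor.lsmul_mk, BalTensor.lsmul_mk, BalTensor.lsmul_mk]
    congr 1
    have h : lActAux M N A (a * b) = (lActAux M N A a).comp (lActAux M N A b) :=
      TensorProduct.ext' fun m n => by
        simp only [LinearMap.comp_apply, lActAux_tmul, mul_smul]
    rw [h]; rfl
  smul_zero a := map_zero (lAct B M N A a)
  smul_add a x y := map_add (lAct B M N A a) x y
  add_smul a b x := by
    obtain ⟨y, rfl⟩ := BalTensor.mk_surjective B M N x
    rw [BalTensor.lsmul_mk, BalTensor.lsmul_mk, BalTensor.lsmul_mk, ← map_add]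
    congr 1
    have h : lActAux M N A (a + b) = lActAux M N A a + lActAux M N A b :=
      TensorProduct.ext' fun m n => by
        simp only [LinearMap.add_apply, lActAux_tmul, add_smul, TensorProduct.add_tmul]
    rw [h]; rfl
  zero_smul x := by
    obtain ⟨y, rfl⟩ := BalTensor.mk_surjective B M N x
    rw [BalTensor.lsmul_mk]
    have h : lActAux M N A (0 : A) = 0 :=
      TensorProduct.ext' fun m n => by
        simp only [lActAux_tmul, zero_smul, TensorProduct.zero_tmul, LinearMap.zero_apply]
    rw [h]
    simp

end LeftAction

section RightAction

variable (B : Type u) [Ring B] (M : Type u) [AddCommGroup M] [Module Bᵐᵒᵖ M]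
  (N : Type u) [AddCommGroup N] [Module B N]
  (C : Type u) [Ring C] [Module Cᵐᵒᵖ N] [SMulCommClass B Cᵐᵒᵖ N]

/-- The right action of `c : Cᵐᵒᵖ` on the plain tensor product. -/
def rActAux (c : Cᵐᵒᵖ) : TensorProduct ℤ M N →ₗ[ℤ] TensorProduct ℤ M N :=
  LinearMap.lTensor M (DistribMulAction.toAddMonoidHom N c).toIntLinearMap

lemma rActAux_tmul (c : Cᵐᵒᵖ) (m : M) (n : N) :
    rActAux M N C c (m ⊗ₜ n) = m ⊗ₜ (c • n) := by
  simp [rActAux]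

lemma rActAux_rel (c : Cᵐᵒᵖ) :
    balRel B M N ≤ (balRel B M N).comap (rActAux M N C c) := by
  rw [balRel, Submodule.span_le]
  rintro z ⟨b, m, n, rfl⟩
  simp only [SetLike.mem_coe, Submodule.mem_comap, map_sub, rActAux_tmul]
  rw [← smul_comm b c n]
  exact Submodule.subset_span ⟨b, m, c • n, rfl⟩

/-- The right action of `Cᵐᵒᵖ` on the balanced tensor product. -/
def rAct (c : Cᵐᵒᵖ) : BalTensor B M N →ₗ[ℤ] BalTensor B M N :=
  Submodule.mapQ _ _ (rActAux M N C c) (rActAux_rel B M N C c)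

instance : SMul Cᵐᵒᵖ (BalTensor B M N) := ⟨fun c x => rAct B M N C c x⟩

lemma BalTensor.rsmul_mk (c : Cᵐᵒᵖ) (x : TensorProduct ℤ M N) :
    c • (BalTensor.mk B M N x) = BalTensor.mk B M N (rActAux M N C c x) := rfl

lemma BalTensor.rsmul_tmul (c : Cᵐᵒᵖ) (m : M) (n : N) :
    c • (BalTensor.tmul B M N m n) = BalTensor.tmul B M N m (c • n) := by
  rw [BalTensor.tmul, BalTensor.rsmul_mk, rActAux_tmul]
  rfl

instance BalTensor.instRightModule : Module Cᵐᵒᵖ (BalTensor B M N) where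
  one_smul x := by
    obtain ⟨y, rfl⟩ := BalTensor.mk_surjective B M N x
    rw [BalTensor.rsmul_mk]
    congr 1
    have h : rActAux M N C (1 : Cᵐᵒᵖ) = LinearMap.id :=
      TensorProduct.ext' fun m n => by rw [rActAux_tmul, one_smul]; rfl
    rw [h]; rfl
  mul_smul a b x := by
    obtain ⟨y, rfl⟩ := BalTensor.mk_surjective B M N x
    rw [BalTensor.rsmul_mk, BalTensor.rsmul_mk, BalTensor.rsmul_mk]
    congr 1
    have h : rActAux M N C (a * b) = (rActAux M N C a).comp (rActAux M N C b) :=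
      TensorProduct.ext' fun m n => by
        simp only [LinearMap.comp_apply, rActAux_tmul, mul_smul]
    rw [h]; rfl
  smul_zero c := map_zero (rAct B M N C c)
  smul_add c x y := map_add (rAct B M N C c) x y
  add_smul a b x := by
    obtain ⟨y, rfl⟩ := BalTensor.mk_surjective B M N x
    rw [BalTensor.rsmul_mk, BalTensor.rsmul_mk, BalTensor.rsmul_mk, ← map_add]
    congr 1
    have h : rActAux M N C (a + b) = rActAux M N C a + rActAux M N C b :=
      TensorProduct.ext' fun m n => by
        simp only [LinearMap.add_apply, rActAux_tmul, add_smul, TensorProduct.tmul_add]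
    rw [h]; rfl
  zero_smul x := by
    obtain ⟨y, rfl⟩ := BalTensor.mk_surjective B M N x
    rw [BalTensor.rsmul_mk]
    have h : rActAux M N C (0 : Cᵐᵒᵖ) = 0 :=
      TensorProduct.ext' fun m n => by
        simp only [rActAux_tmul, zero_smul, TensorProduct.tmul_zero, LinearMap.zero_apply]
    rw [h]
    simp

end RightAction

section Comm

variable (B : Type u) [Ring B] (M : Type u) [AddCommGroup M] [Module Bᵐᵒᵖ M]
  (N : Type u) [AddCommGroup N] [Module B N]
  (A : Type u) [Ring A] [Module A M] [SMulCommClass A Bᵐᵒᵖ M]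
  (C : Type u) [Ring C] [Module Cᵐᵒᵖ N] [SMulCommClass B Cᵐᵒᵖ N]

instance BalTensor.instSMulCommClass : SMulCommClass A Cᵐᵒᵖ (BalTensor B M N) := by
  constructor
  intro a c x
  obtain ⟨y, rfl⟩ := BalTensor.mk_surjective B M N x
  rw [BalTensor.rsmul_mk, BalTensor.lsmul_mk, BalTensor.lsmul_mk, BalTensor.rsmul_mk]
  congr 1
  have h : (lActAux M N A a).comp (rActAux M N C c)
      = (rActAux M N C c).comp (lActAux M N A a) :=
    TensorProduct.ext' fun m n => by
      simp only [LinearMap.comp_apply, lActAux_tmul, rActAux_tmul]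
  exact DFunLike.congr_fun h y

end Comm

section BimodHom

variable (A : Type u) [Ring A] (C : Type u) [Ring C]
variable (X : Type u) [AddCommGroup X] [Module A X] [Module Cᵐᵒᵖ X]
variable (Y : Type u) [AddCommGroup Y] [Module A Y] [Module Cᵐᵒᵖ Y]

/-- A map of `(A,C)`-bimodules: additive, left `A`-equivariant and right `C`-equivariant. -/
structure IsBimodHom (f : X → Y) : Prop where
  map_add : ∀ x y, f (x + y) = f x + f y
  map_lsmul : ∀ (a : A) (x : X), f (a • x) = a • f x
  map_rsmul : ∀ (c : Cᵐᵒᵖ) (x : X), f (c • x) = c • f x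

/-- `X` is (isomorphic to) a direct summand of `Y` as an `(A,C)`-bimodule,
i.e. a retract of `Y`. -/
def IsBimodSummand : Prop :=
  ∃ (i : X → Y) (p : Y → X), IsBimodHom A C X Y i ∧ IsBimodHom A C Y X p ∧ ∀ x, p (i x) = x

end BimodHom

section Jorder

variable (k : Type u) [Field k]

/-- A finite-dimensional `(A,B)`-bimodule over `k`, whose two induced `k`-actions agree
with the given one. -/
structure BimodData (A B : Type u) [Ring A] [Ring B] [Algebra k A] [Algebra k B] :
    Type (u + 1) where
  X : Type u
  [acg : AddCommGroup X]
  [modk : Module k X]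
  [modl : Module A X]
  [modr : Module Bᵐᵒᵖ X]
  [scc : SMulCommClass A Bᵐᵒᵖ X]
  [tl : IsScalarTower k A X]
  [tr : IsScalarTower k Bᵐᵒᵖ X]
  [fd : FiniteDimensional k X]

attribute [instance] BimodData.acg BimodData.modk BimodData.modl BimodData.modr BimodData.scc
  BimodData.tl BimodData.tr BimodData.fd

variable (A B : Type u) [Ring A] [Ring B] [Algebra k A] [Algebra k B]

/-- `A ≥_J B`: there are finite-dimensional bimodules `M`, `N` such that the regular
`A`-`A`-bimodule `A` is a direct summand of `M ⊗_B N`. -/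
def Jge : Prop :=
  ∃ (M : BimodData k A B) (N : BimodData k B A),
    IsBimodSummand A A A (BalTensor B M.X N.X)

/-- `A ≤_J B`. -/
def Jle : Prop := Jge k B A

/-- `A ∼_J B`: two-sided equivalence. -/
def Jequiv : Prop := Jge k A B ∧ Jge k B A

/-- `A >_J B`: strict two-sided inequality. -/
def Jgt : Prop := Jge k A B ∧ ¬ Jge k B A

end Jorder


section RMap

variable (B : Type u) [Ring B] (M : Type u) [AddCommGroup M] [Module Bᵐᵒᵖ M]
  (A : Type u) [Ring A] [Module A M] [SMulCommClass A Bᵐᵒᵖ M]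
  (X : Type u) [AddCommGroup X] [Module B X]
  (X' : Type u) [AddCommGroup X'] [Module B X']

/-- Auxiliary map `M ⊗ X → M ⊗ X'` induced by `f : X → X'`. -/
def rmapAux (f : X →ₗ[B] X') : TensorProduct ℤ M X →ₗ[ℤ] TensorProduct ℤ M X' :=
  LinearMap.lTensor M f.toAddMonoidHom.toIntLinearMap

lemma rmapAux_tmul (f : X →ₗ[B] X') (m : M) (x : X) :
    rmapAux B M X X' f (m ⊗ₜ x) = m ⊗ₜ (f x) := by
  simp [rmapAux]

lemma rmapAux_rel (f : X →ₗ[B] X') :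
    balRel B M X ≤ (balRel B M X').comap (rmapAux B M X X' f) := by
  rw [balRel, Submodule.span_le]
  rintro z ⟨b, m, x, rfl⟩
  simp only [SetLike.mem_coe, Submodule.mem_comap, map_sub, rmapAux_tmul, map_smul]
  exact Submodule.subset_span ⟨b, m, f x, rfl⟩

/-- The map `M ⊗_B X → M ⊗_B X'` induced by `f : X → X'`, as a `ℤ`-linear map. -/
def rmapQ (f : X →ₗ[B] X') : BalTensor B M X →ₗ[ℤ] BalTensor B M X' :=
  Submodule.mapQ _ _ (rmapAux B M X X' f) (rmapAux_rel B M X X' f)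

lemma rmapQ_mk (f : X →ₗ[B] X') (z : TensorProduct ℤ M X) :
    rmapQ B M X X' f (BalTensor.mk B M X z) = BalTensor.mk B M X' (rmapAux B M X X' f z) :=
  rfl

lemma rmapAux_lActAux (f : X →ₗ[B] X') (a : A) (z : TensorProduct ℤ M X) :
    rmapAux B M X X' f (lActAux M X A a z) = lActAux M X' A a (rmapAux B M X X' f z) := by
  have h : (rmapAux B M X X' f).comp (lActAux M X A a)
      = (lActAux M X' A a).comp (rmapAux B M X X' f) := by
    unfold rmapAux lActAux
    rw [LinearMap.lTensor_comp_rTensor, LinearMap.rTensor_comp_lTensor]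
  exact DFunLike.congr_fun h z

/-- The functorial map `M ⊗_B X → M ⊗_B X'` induced by `f : X → X'`,
as a map of left `A`-modules. -/
def rmapA (f : X →ₗ[B] X') : BalTensor B M X →ₗ[A] BalTensor B M X' where
  toFun := rmapQ B M X X' f
  map_add' := map_add _
  map_smul' a y := by
    obtain ⟨z, rfl⟩ := BalTensor.mk_surjective B M X y
    simp only [RingHom.id_apply]
    rw [BalTensor.lsmul_mk, rmapQ_mk, rmapQ_mk, BalTensor.lsmul_mk, rmapAux_lActAux]

end RMap

section Adjunction

variable (k : Type u) [Field k]

/-- A bundled finite (i.e. finite-dimensional) module over a ring. -/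
structure FinModuleData (R : Type u) [Ring R] : Type (u + 1) where
  X : Type u
  [acg : AddCommGroup X]
  [mod : Module R X]
  [fin : Module.Finite R X]

attribute [instance] FinModuleData.acg FinModuleData.mod FinModuleData.fin

variable (A : Type u) [Ring A] (B : Type u) [Ring B]
  (M : Type u) [AddCommGroup M] [Module A M] [Module Bᵐᵒᵖ M] [SMulCommClass A Bᵐᵒᵖ M]
  (N : Type u) [AddCommGroup N] [Module B N] [Module Aᵐᵒᵖ N] [SMulCommClass B Aᵐᵒᵖ N]

/-- The functor `M ⊗_B −` from finite-dimensional left `B`-modules to finite-dimensional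
left `A`-modules is left adjoint to the functor `N ⊗_A −`: there is a bijection of
hom-sets which is natural in both variables. -/
def TensorAdjunction : Prop :=
  ∃ e : ∀ (X : FinModuleData B) (Y : FinModuleData A),
      (BalTensor B M X.X →ₗ[A] Y.X) ≃ (X.X →ₗ[B] BalTensor A N Y.X),
    (∀ (X X' : FinModuleData B) (f : X.X →ₗ[B] X'.X) (Y : FinModuleData A)
        (h : BalTensor B M X'.X →ₗ[A] Y.X),
        e X Y (h.comp (rmapA B M A X.X X'.X f)) = (e X' Y h).comp f) ∧
    (∀ (X : FinModuleData B) (Y Y' : FinModuleData A) (g : Y.X →ₗ[A] Y'.X)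
        (h : BalTensor B M X.X →ₗ[A] Y.X),
        e X Y' (g.comp h) = (rmapA A N B Y.X Y'.X g).comp (e X Y h))

end Adjunction
section Stmt7

variable (k : Type u) [Field k]
variable (A B : Type u) [Ring A] [Ring B] [Algebra k A] [Algebra k B]

/-- `A` and `B` are symmetrically separably equivalent: there are bimodules `M` and `N`,
projective on either side, such that `A` is a direct summand of `M ⊗_B N`, `B` is a direct
summand of `N ⊗_A M`, and the functors `M ⊗_B −` and `N ⊗_A −` are biadjoint. -/
def SymSepEquiv : Prop :=
  ∃ (M : BimodData k A B) (N : BimodData k B A),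
    Module.Projective A M.X ∧ Module.Projective Bᵐᵒᵖ M.X ∧
    Module.Projective B N.X ∧ Module.Projective Aᵐᵒᵖ N.X ∧
    IsBimodSummand A A A (BalTensor B M.X N.X) ∧
    IsBimodSummand B B B (BalTensor A N.X M.X) ∧
    TensorAdjunction A B M.X N.X ∧ TensorAdjunction B A N.X M.X

end Stmt7

section AuxTmul

variable (B : Type u) [Ring B] (M : Type u) [AddCommGroup M] [Module Bᵐᵒᵖ M]
  (N : Type u) [AddCommGroup N] [Module B N]

lemma tmul_add_left (m m' : M) (n : N) :
    BalTensor.tmul B M N (m + m') n = BalTensor.tmul B M N m n + BalTensor.tmul B M N m' n := by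
  unfold BalTensor.tmul
  rw [TensorProduct.add_tmul, map_add]

end AuxTmul

section AuxUnitCounit

variable (B : Type u) [Ring B] (M : Type u) [AddCommGroup M] [Module Bᵐᵒᵖ M]
  (A : Type u) [Ring A] [Module A M] [SMulCommClass A Bᵐᵒᵖ M]

/-- The unit map `M → M ⊗_B B`, `m ↦ m ⊗ 1`. -/
def unitA : M →ₗ[A] BalTensor B M B where
  toFun m := BalTensor.tmul B M B m 1
  map_add' m m' := tmul_add_left B M B m m' 1
  map_smul' a m := (BalTensor.lsmul_tmul B M B A a m 1).symm

/-- Auxiliary additive map `b ↦ op b • m`. -/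
def counitInner (m : M) : B →+ M where
  toFun b := op b • m
  map_zero' := by show op (0 : B) • m = 0; rw [op_zero, zero_smul]
  map_add' b b' := by
    show op (b + b') • m = op b • m + op b' • m
    rw [op_add, add_smul]

/-- The bilinear counit map. -/
def counitBil : M →ₗ[ℤ] B →ₗ[ℤ] M where
  toFun m := (counitInner B M m).toIntLinearMap
  map_add' m m' := by
    ext b
    simp [counitInner, smul_add]
  map_smul' c m := by
    ext b
    exact AddMonoidHom.map_zsmul (DistribMulAction.toAddMonoidHom M (op b)) c m

/-- The counit on the plain tensor product. -/
def counit0 : TensorProduct ℤ M B →ₗ[ℤ] M := TensorProduct.lift (counitBil B M)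

lemma counit0_tmul (m : M) (b : B) : counit0 B M (m ⊗ₜ b) = op b • m := rfl

lemma counit0_rel : balRel B M B ≤ LinearMap.ker (counit0 B M) := by
  rw [balRel, Submodule.span_le]
  rintro z ⟨b, m, b', rfl⟩
  simp only [SetLike.mem_coe, LinearMap.mem_ker, map_sub, counit0_tmul]
  rw [smul_eq_mul, op_mul, mul_smul, sub_self]

/-- The counit map `M ⊗_B B → M` as a `ℤ`-linear map. -/
def counitZ : BalTensor B M B →ₗ[ℤ] M :=
  Submodule.liftQ _ (counit0 B M) (counit0_rel B M)

lemma counitZ_mk (z : TensorProduct ℤ M B) :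
    counitZ B M (BalTensor.mk B M B z) = counit0 B M z := rfl

lemma counitZ_tmul (m : M) (b : B) :
    counitZ B M (BalTensor.tmul B M B m b) = op b • m := rfl

/-- The counit map `M ⊗_B B → M` as an `A`-linear map. -/
def counitA : BalTensor B M B →ₗ[A] M where
  toFun := counitZ B M
  map_add' := map_add _
  map_smul' a x := by
    obtain ⟨z, rfl⟩ := BalTensor.mk_surjective B M B x
    show counitZ B M (a • BalTensor.mk B M B z) = a • counitZ B M (BalTensor.mk B M B z)
    rw [BalTensor.lsmul_mk, counitZ_mk, counitZ_mk]
    have h : (counit0 B M).comp (lActAux M B A a)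
        = ((DistribMulAction.toAddMonoidHom M a).toIntLinearMap).comp (counit0 B M) :=
      TensorProduct.ext' fun m b => by
        simp only [LinearMap.comp_apply, lActAux_tmul, counit0_tmul,
          AddMonoidHom.coe_toIntLinearMap, DistribMulAction.toAddMonoidHom_apply]
        exact (smul_comm a (op b) m).symm
    exact DFunLike.congr_fun h z

lemma counitA_tmul (m : M) (b : B) :
    counitA B M A (BalTensor.tmul B M B m b) = op b • m := rfl

lemma counitA_unitA (m : M) : counitA B M A (unitA B M A m) = m := by
  show counitZ B M (BalTensor.tmul B M B m 1) = m
  rw [counitZ_tmul, op_one, one_smul]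

lemma unitA_counitA (x : BalTensor B M B) : unitA B M A (counitA B M A x) = x := by
  obtain ⟨z, rfl⟩ := BalTensor.mk_surjective B M B x
  induction z using TensorProduct.induction_on with
  | zero => rw [map_zero, map_zero, map_zero]
  | tmul m b =>
    show BalTensor.tmul B M B (op b • m) 1 = BalTensor.tmul B M B m b
    rw [BalTensor.balance, smul_eq_mul, mul_one]
  | add z w hz hw => rw [map_add, map_add, map_add, hz, hw]

lemma unitA_comp_counitA :
    (unitA B M A).comp (counitA B M A) = LinearMap.id :=
  LinearMap.ext (unitA_counitA B M A)

end AuxUnitCounit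

section AuxRMap

variable (B : Type u) [Ring B] (M : Type u) [AddCommGroup M] [Module Bᵐᵒᵖ M]
  (A : Type u) [Ring A] [Module A M] [SMulCommClass A Bᵐᵒᵖ M]
  (X : Type u) [AddCommGroup X] [Module B X]
  (X' : Type u) [AddCommGroup X'] [Module B X']

lemma rmapA_mk (f : X →ₗ[B] X') (z : TensorProduct ℤ M X) :
    rmapA B M A X X' f (BalTensor.mk B M X z)
      = BalTensor.mk B M X' (rmapAux B M X X' f z) := rfl

lemma rmapA_tmul (f : X →ₗ[B] X') (m : M) (x : X) :
    rmapA B M A X X' f (BalTensor.tmul B M X m x) = BalTensor.tmul B M X' m (f x) := by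
  rw [BalTensor.tmul, rmapA_mk, rmapAux_tmul]
  rfl

lemma rmapA_surjective (f : X →ₗ[B] X') (hf : Function.Surjective f) :
    Function.Surjective (rmapA B M A X X' f) := by
  intro y
  obtain ⟨z, rfl⟩ := BalTensor.mk_surjective B M X' y
  have hs : Function.Surjective (rmapAux B M X X' f) :=
    LinearMap.lTensor_surjective M (g := f.toAddMonoidHom.toIntLinearMap) hf
  obtain ⟨w, hw⟩ := hs z
  exact ⟨BalTensor.mk B M X w, by rw [rmapA_mk, hw]⟩

lemma rmapA_add (f g : X →ₗ[B] X') :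
    rmapA B M A X X' (f + g) = rmapA B M A X X' f + rmapA B M A X X' g := by
  apply LinearMap.ext; intro y
  obtain ⟨z, rfl⟩ := BalTensor.mk_surjective B M X y
  rw [LinearMap.add_apply, rmapA_mk, rmapA_mk, rmapA_mk, ← map_add]
  congr 1
  have h : rmapAux B M X X' (f + g) = rmapAux B M X X' f + rmapAux B M X X' g :=
    TensorProduct.ext' fun m x => by
      simp only [rmapAux_tmul, LinearMap.add_apply, TensorProduct.tmul_add]
  rw [h]
  rfl

end AuxRMap

section AuxAdd

variable (A : Type u) [Ring A] (B : Type u) [Ring B]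
  (M : Type u) [AddCommGroup M] [Module A M] [Module Bᵐᵒᵖ M] [SMulCommClass A Bᵐᵒᵖ M]
  (N : Type u) [AddCommGroup N] [Module B N] [Module Aᵐᵒᵖ N] [SMulCommClass B Aᵐᵒᵖ N]

variable (e : ∀ (X : FinModuleData B) (Y : FinModuleData A),
      (BalTensor B M X.X →ₗ[A] Y.X) ≃ (X.X →ₗ[B] BalTensor A N Y.X))
  (nat₂ : ∀ (X : FinModuleData B) (Y Y' : FinModuleData A) (g : Y.X →ₗ[A] Y'.X)
      (h : BalTensor B M X.X →ₗ[A] Y.X),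
      e X Y' (g.comp h) = (rmapA A N B Y.X Y'.X g).comp (e X Y h))

include nat₂ in
lemma e_add (X : FinModuleData B) (Y : FinModuleData A)
    (h h' : BalTensor B M X.X →ₗ[A] Y.X) :
    e X Y (h + h') = e X Y h + e X Y h' := by
  have h1 : (LinearMap.fst A Y.X Y.X).comp (h.prod h') = h := LinearMap.ext fun _ => rfl
  have h2 : (LinearMap.snd A Y.X Y.X).comp (h.prod h') = h' := LinearMap.ext fun _ => rfl
  have h3 : (LinearMap.fst A Y.X Y.X + LinearMap.snd A Y.X Y.X).comp (h.prod h') = h + h' :=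
    LinearMap.ext fun _ => rfl
  calc e X Y (h + h')
      = e X Y ((LinearMap.fst A Y.X Y.X + LinearMap.snd A Y.X Y.X).comp (h.prod h')) := by
        rw [h3]
    _ = (rmapA A N B (Y.X × Y.X) Y.X (LinearMap.fst A Y.X Y.X + LinearMap.snd A Y.X Y.X)).comp
          (e X ⟨Y.X × Y.X⟩ (h.prod h')) := nat₂ X ⟨Y.X × Y.X⟩ Y _ _
    _ = (rmapA A N B (Y.X × Y.X) Y.X (LinearMap.fst A Y.X Y.X)).comp
          (e X ⟨Y.X × Y.X⟩ (h.prod h'))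
        + (rmapA A N B (Y.X × Y.X) Y.X (LinearMap.snd A Y.X Y.X)).comp
          (e X ⟨Y.X × Y.X⟩ (h.prod h')) := by
        rw [rmapA_add, LinearMap.add_comp]
    _ = e X Y ((LinearMap.fst A Y.X Y.X).comp (h.prod h'))
        + e X Y ((LinearMap.snd A Y.X Y.X).comp (h.prod h')) := by
        rw [nat₂ X ⟨Y.X × Y.X⟩ Y _ _, nat₂ X ⟨Y.X × Y.X⟩ Y _ _]
    _ = e X Y h + e X Y h' := by rw [h1, h2]

include nat₂ in
lemma e_symm_add (X : FinModuleData B) (Y : FinModuleData A)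
    (u v : X.X →ₗ[B] BalTensor A N Y.X) :
    (e X Y).symm (u + v) = (e X Y).symm u + (e X Y).symm v := by
  apply (e X Y).injective
  rw [Equiv.apply_symm_apply, e_add A B M N e nat₂, Equiv.apply_symm_apply,
    Equiv.apply_symm_apply]

end AuxAdd

section AuxHomProj

variable (A : Type u) [Ring A] (M : Type u) [AddCommGroup M] [Module A M]

/-- If `M` is a finite projective left `A`-module, then `Hom_A(M, A)` is a projective
`Aᵐᵒᵖ`-module (i.e. right `A`-module). -/
lemma homProj [Module.Finite A M] (hM : Module.Projective A M) :
    Module.Projective Aᵐᵒᵖ (M →ₗ[A] A) := by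
  obtain ⟨n, π, hπ⟩ := Module.Finite.exists_fin' A M
  obtain ⟨σ, hσ⟩ := Module.projective_lifting_property (h := hM) π LinearMap.id hπ
  let ε : ((Fin n → A) →ₗ[A] A) ≃ₗ[Aᵐᵒᵖ] (Fin n → Aᵐᵒᵖ) :=
    { toFun := fun f i => op (f (Pi.single i 1))
      map_add' := fun f g => funext fun i => by
        simp only [LinearMap.add_apply, op_add, Pi.add_apply]
      map_smul' := fun a f => funext fun i => by
        show op (f (Pi.single i 1) * unop a) = a * op (f (Pi.single i 1))
        rw [op_mul, op_unop]
      invFun := fun v =>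
        { toFun := fun x => ∑ i, x i * unop (v i)
          map_add' := fun x y => by
            simp only [Pi.add_apply, add_mul, Finset.sum_add_distrib]
          map_smul' := fun c x => by
            simp only [Pi.smul_apply, smul_eq_mul, RingHom.id_apply, Finset.mul_sum, mul_assoc]
        }
      left_inv := fun f => LinearMap.ext fun x => by
        show ∑ i, x i * unop (op (f (Pi.single i 1))) = f x
        have h1 : ∀ i : Fin n, Pi.single i (x i) = x i • (Pi.single i 1 : Fin n → A) :=
          fun i => by
            have h2 := Pi.single_smul (f := fun _ : Fin n => A) i (x i) (1 : A)
            rw [smul_eq_mul, mul_one] at h2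
            exact h2
        calc ∑ i, x i * unop (op (f (Pi.single i 1)))
            = ∑ i, f (Pi.single i (x i)) := by
              simp only [unop_op, h1, map_smul, smul_eq_mul]
          _ = f (∑ i, Pi.single i (x i)) := (map_sum f _ _).symm
          _ = f x := by rw [Finset.univ_sum_single]
      right_inv := fun v => funext fun i => by
        show op (∑ j, (Pi.single i (1 : A) : Fin n → A) j * unop (v j)) = v i
        rw [Finset.sum_eq_single i]
        · rw [Pi.single_eq_same, one_mul, op_unop]
        · intro j _ hj
          rw [Pi.single_eq_of_ne hj, zero_mul]
        · intro h; exact absurd (Finset.mem_univ i) h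
    }
  haveI hfree : Module.Projective Aᵐᵒᵖ ((Fin n → A) →ₗ[A] A) :=
    Module.Projective.of_basis (Module.Basis.ofEquivFun ε)
  let Pπ : (M →ₗ[A] A) →ₗ[Aᵐᵒᵖ] ((Fin n → A) →ₗ[A] A) :=
    { toFun := fun q => q.comp π
      map_add' := fun q q' => LinearMap.ext fun _ => rfl
      map_smul' := fun a q => LinearMap.ext fun _ => rfl }
  let Pσ : ((Fin n → A) →ₗ[A] A) →ₗ[Aᵐᵒᵖ] (M →ₗ[A] A) :=
    { toFun := fun q => q.comp σ
      map_add' := fun q q' => LinearMap.ext fun _ => rfl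
      map_smul' := fun a q => LinearMap.ext fun _ => rfl }
  refine Module.Projective.of_split Pπ Pσ ?_
  apply LinearMap.ext; intro q
  apply LinearMap.ext; intro m
  show q (π (σ m)) = q m
  have : π (σ m) = m := LinearMap.congr_fun hσ m
  rw [this]

end AuxHomProj

section AuxMain

variable (A : Type u) [Ring A] (B : Type u) [Ring B]
  (M : Type u) [AddCommGroup M] [Module A M] [Module Bᵐᵒᵖ M] [SMulCommClass A Bᵐᵒᵖ M]
  (N : Type u) [AddCommGroup N] [Module B N] [Module Aᵐᵒᵖ N] [SMulCommClass B Aᵐᵒᵖ N]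

/-- If `M ⊗_B −` is left adjoint to `N ⊗_A −`, then `M` is projective as a left
`A`-module. -/
lemma proj_left [Module.Finite A M] (hadj : TensorAdjunction A B M N) :
    Module.Projective A M := by
  obtain ⟨e, -, nat₂⟩ := hadj
  obtain ⟨n, π, hπ⟩ := Module.Finite.exists_fin' A M
  haveI : Module.Projective A (Fin n → A) := Module.Projective.of_basis (Pi.basisFun A (Fin n))
  obtain ⟨t, ht⟩ := rmapA_surjective A N B (Fin n → A) M π hπ
    (e ⟨B⟩ ⟨M⟩ (counitA B M A) 1)
  have key : π.comp ((e ⟨B⟩ ⟨Fin n → A⟩).symm (LinearMap.toSpanSingleton B _ t))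
      = counitA B M A := by
    apply (e ⟨B⟩ ⟨M⟩).injective
    rw [nat₂ ⟨B⟩ ⟨Fin n → A⟩ ⟨M⟩ π _, Equiv.apply_symm_apply]
    apply LinearMap.ext_ring
    show rmapA A N B (Fin n → A) M π ((1 : B) • t) = e ⟨B⟩ ⟨M⟩ (counitA B M A) 1
    rw [one_smul, ht]
  refine Module.Projective.of_split
    (((e ⟨B⟩ ⟨Fin n → A⟩).symm (LinearMap.toSpanSingleton B _ t)).comp (unitA B M A)) π ?_
  apply LinearMap.ext; intro m
  show π ((e ⟨B⟩ ⟨Fin n → A⟩).symm (LinearMap.toSpanSingleton B _ t) (unitA B M A m)) = m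
  have h1 := LinearMap.congr_fun key (unitA B M A m)
  rw [LinearMap.comp_apply] at h1
  rw [h1, counitA_unitA]

/-- If `M ⊗_B −` is left adjoint to `N ⊗_A −` and `M` is a finite projective left
`A`-module, then `N` is projective as a right `A`-module. -/
lemma proj_op [Module.Finite A M] (hadj : TensorAdjunction A B M N)
    (hM : Module.Projective A M) : Module.Projective Aᵐᵒᵖ N := by
  obtain ⟨e, -, nat₂⟩ := hadj
  -- the comparison maps
  set T : N → (M →ₗ[A] A) := fun n =>
    ((e ⟨B⟩ ⟨A⟩).symm
      (LinearMap.toSpanSingleton B (BalTensor A N A) (BalTensor.tmul A N A n 1))).comp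
      (unitA B M A) with hT
  set S : (M →ₗ[A] A) → N := fun q =>
    counitA A N B (e ⟨B⟩ ⟨A⟩ (q.comp (counitA B M A)) 1) with hS
  have hψ1 : ∀ z : BalTensor A N A,
      LinearMap.toSpanSingleton B (BalTensor A N A) z 1 = z := fun z => one_smul B z
  have hST : ∀ nn : N, S (T nn) = nn := by
    intro nn
    have h1 : (T nn).comp (counitA B M A)
        = (e ⟨B⟩ ⟨A⟩).symm
          (LinearMap.toSpanSingleton B (BalTensor A N A) (BalTensor.tmul A N A nn 1)) := by
      apply LinearMap.ext; intro x
      show ((e ⟨B⟩ ⟨A⟩).symm _) (unitA B M A (counitA B M A x)) = _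
      rw [unitA_counitA]
    rw [hS]
    show counitA A N B (e ⟨B⟩ ⟨A⟩ ((T nn).comp (counitA B M A)) 1) = nn
    rw [h1, Equiv.apply_symm_apply, hψ1]
    exact counitA_unitA A N B nn
  have hTS : ∀ q : M →ₗ[A] A, T (S q) = q := by
    intro q
    have h2 : LinearMap.toSpanSingleton B (BalTensor A N A)
          (BalTensor.tmul A N A (S q) 1)
        = e ⟨B⟩ ⟨A⟩ (q.comp (counitA B M A)) := by
      apply LinearMap.ext_ring
      rw [hψ1]
      show unitA A N B (counitA A N B (e ⟨B⟩ ⟨A⟩ (q.comp (counitA B M A)) 1)) = _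
      rw [unitA_counitA]
    rw [hT]
    show ((e ⟨B⟩ ⟨A⟩).symm (LinearMap.toSpanSingleton B (BalTensor A N A)
        (BalTensor.tmul A N A (S q) 1))).comp (unitA B M A) = q
    rw [h2, Equiv.symm_apply_apply]
    apply LinearMap.ext; intro m
    show q (counitA B M A (unitA B M A m)) = q m
    rw [counitA_unitA]
  have hadd : ∀ nn nn' : N, T (nn + nn') = T nn + T nn' := by
    intro nn nn'
    have hψ : LinearMap.toSpanSingleton B (BalTensor A N A)
          (BalTensor.tmul A N A (nn + nn') 1)
        = LinearMap.toSpanSingleton B (BalTensor A N A) (BalTensor.tmul A N A nn 1)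
          + LinearMap.toSpanSingleton B (BalTensor A N A) (BalTensor.tmul A N A nn' 1) := by
      apply LinearMap.ext; intro b
      show b • BalTensor.tmul A N A (nn + nn') 1
        = b • BalTensor.tmul A N A nn 1 + b • BalTensor.tmul A N A nn' 1
      rw [tmul_add_left A N A nn nn' 1, smul_add]
    rw [hT]
    show ((e ⟨B⟩ ⟨A⟩).symm _).comp (unitA B M A) = _
    rw [hψ, e_symm_add A B M N e nat₂ ⟨B⟩ ⟨A⟩ _ _, LinearMap.add_comp]
  have hsmul : ∀ (a : Aᵐᵒᵖ) (nn : N), T (a • nn) = a • T nn := by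
    intro a nn
    have hψa : LinearMap.toSpanSingleton B (BalTensor A N A)
          (BalTensor.tmul A N A (a • nn) 1)
        = (rmapA A N B A A (LinearMap.toSpanSingleton A A (unop a))).comp
          (LinearMap.toSpanSingleton B (BalTensor A N A) (BalTensor.tmul A N A nn 1)) := by
      apply LinearMap.ext_ring
      rw [hψ1]
      show BalTensor.tmul A N A (a • nn) 1
        = rmapA A N B A A (LinearMap.toSpanSingleton A A (unop a))
          (LinearMap.toSpanSingleton B (BalTensor A N A) (BalTensor.tmul A N A nn 1) 1)
      rw [hψ1, rmapA_tmul]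
      have hb := BalTensor.balance A N A (unop a) nn 1
      rw [op_unop] at hb
      rw [hb]
      congr 1
      show unop a • (1 : A) = (1 : A) • unop a
      rw [smul_eq_mul, smul_eq_mul, mul_one, one_mul]
    have hnat : e ⟨B⟩ ⟨A⟩ ((LinearMap.toSpanSingleton A A (unop a)).comp
          ((e ⟨B⟩ ⟨A⟩).symm
            (LinearMap.toSpanSingleton B (BalTensor A N A) (BalTensor.tmul A N A nn 1))))
        = (rmapA A N B A A (LinearMap.toSpanSingleton A A (unop a))).comp
          (LinearMap.toSpanSingleton B (BalTensor A N A) (BalTensor.tmul A N A nn 1)) := by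
      rw [nat₂ ⟨B⟩ ⟨A⟩ ⟨A⟩ _ _, Equiv.apply_symm_apply]
    have h3 : (e ⟨B⟩ ⟨A⟩).symm (LinearMap.toSpanSingleton B (BalTensor A N A)
          (BalTensor.tmul A N A (a • nn) 1))
        = (LinearMap.toSpanSingleton A A (unop a)).comp
          ((e ⟨B⟩ ⟨A⟩).symm
            (LinearMap.toSpanSingleton B (BalTensor A N A) (BalTensor.tmul A N A nn 1))) := by
      rw [hψa, ← hnat, Equiv.symm_apply_apply]
    rw [hT]
    show ((e ⟨B⟩ ⟨A⟩).symm _).comp (unitA B M A) = a • T nn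
    rw [h3]
    apply LinearMap.ext; intro m
    show ((e ⟨B⟩ ⟨A⟩).symm
        (LinearMap.toSpanSingleton B (BalTensor A N A) (BalTensor.tmul A N A nn 1))
        (unitA B M A m)) • unop a = (a • T nn) m
    rw [hT]
    rfl
  haveI hdual : Module.Projective Aᵐᵒᵖ (M →ₗ[A] A) := homProj A M hM
  let TL : N ≃ₗ[Aᵐᵒᵖ] (M →ₗ[A] A) :=
    { toFun := T
      map_add' := hadd
      map_smul' := hsmul
      invFun := S
      left_inv := hST
      right_inv := hTS }
  exact Module.Projective.of_split TL.toLinearMap TL.symm.toLinearMap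
    (LinearMap.ext fun nn => TL.symm_apply_apply nn)

end AuxMain

/-- If `A` is a direct summand of `M ⊗_B N`, `B` is a direct summand of
`N ⊗_A M`, and the functors `M ⊗_B −` and `N ⊗_A −` are biadjoint, then `M` and `N` are
projective on either side; consequently `A` and `B` are symmetrically separably equivalent. -/
theorem stmt7 (k A B M N : Type u) [Field k]
    [Ring A] [Algebra k A] [FiniteDimensional k A]
    [Ring B] [Algebra k B] [FiniteDimensional k B]
    [AddCommGroup M] [Module k M] [Module A M] [Module Bᵐᵒᵖ M]
    [SMulCommClass A Bᵐᵒᵖ M] [IsScalarTower k A M] [IsScalarTower k Bᵐᵒᵖ M]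
    [FiniteDimensional k M]
    [AddCommGroup N] [Module k N] [Module B N] [Module Aᵐᵒᵖ N]
    [SMulCommClass B Aᵐᵒᵖ N] [IsScalarTower k B N] [IsScalarTower k Aᵐᵒᵖ N]
    [FiniteDimensional k N]
    (hA : IsBimodSummand A A A (BalTensor B M N))
    (hB : IsBimodSummand B B B (BalTensor A N M))
    (hadj₁ : TensorAdjunction A B M N) (hadj₂ : TensorAdjunction B A N M) :
    (Module.Projective A M ∧ Module.Projective Bᵐᵒᵖ M ∧
      Module.Projective B N ∧ Module.Projective Aᵐᵒᵖ N) ∧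
    SymSepEquiv k A B := by
  haveI : Module.Finite A M := Module.Finite.of_restrictScalars_finite k A M
  haveI : Module.Finite B N := Module.Finite.of_restrictScalars_finite k B N
  have pAM : Module.Projective A M := proj_left A B M N hadj₁
  have pBN : Module.Projective B N := proj_left B A N M hadj₂
  have pAN : Module.Projective Aᵐᵒᵖ N := proj_op A B M N hadj₁ pAM
  have pBM : Module.Projective Bᵐᵒᵖ M := proj_op B A N M hadj₂ pBN
  exact ⟨⟨pAM, pBM, pBN, pAN⟩,
    ⟨⟨M⟩, ⟨N⟩, pAM, pBM, pBN, pAN, hA, hB, hadj₁, hadj₂⟩⟩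


end

end JJ
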